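/- For every positive integer κ, all quaternions α, β ∈ ℍ, every homogeneous polynomial P(X,Y) of degree κ with complex coefficients, and all (X₀,Y₀) ∈ ℂ², one has ∫_ℍ exp(2πi·tr(αy))·exp(−2π·N(y))·P((X₀,Y₀)·A(y+β)) dy = exp(−2π·N(α))·P((X₀,Y₀)·(√−1·A(ᾱ)+A(β))). (This is the evaluated form of the identity ∫_ℍ e(tr(αy)+√−1·ȳy)·σ_κ(y+β) dy = e(√−1·ᾱα)·σ_κ(√−1·ᾱ+β).) -/

import Mathlib

open MeasureTheory
open scoped ENNReal

noncomputable section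

/-- The ℝ-algebra embedding `A : ℍ → M₂(ℂ)`,
`A(a₀+a₁i+a₂j+a₃k) = [[a₀+a₁√−1, a₂+a₃√−1],[−a₂+a₃√−1, a₀−a₁√−1]]`. -/
def Amap (q : Quaternion ℝ) : Matrix (Fin 2) (Fin 2) ℂ :=
  !![(q.re : ℂ) + (q.imI : ℂ) * Complex.I, (q.imJ : ℂ) + (q.imK : ℂ) * Complex.I;
     -(q.imJ : ℂ) + (q.imK : ℂ) * Complex.I, (q.re : ℂ) - (q.imI : ℂ) * Complex.I]

/-- The coordinate identification `ℝ⁴ ≅ ℍ`. -/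
def quatOf (a : Fin 4 → ℝ) : Quaternion ℝ := ⟨a 0, a 1, a 2, a 3⟩

/-- Reduced trace `tr(x) = x + x̄ = 2·Re(x)`. -/
def qtr (x : Quaternion ℝ) : ℝ := 2 * x.re

/-- Reduced norm `N(x) = x·x̄ = a₀²+a₁²+a₂²+a₃²`. -/
def qN (x : Quaternion ℝ) : ℝ := x.re ^ 2 + x.imI ^ 2 + x.imJ ^ 2 + x.imK ^ 2

namespace Stmt0Aux

open Complex Finset Real Filter
open scoped Topology

/-- The Gaussian-oscillatory weight. -/
noncomputable def Ef (t a : Fin 4 → ℝ) : ℂ :=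
  Complex.exp (∑ j, (-(2*(π:ℂ)) * ((a j : ℂ))^2 + (4*(π:ℂ)*Complex.I*((t j : ℂ))) * ((a j : ℂ))))

/-- Affine-linear form. -/
noncomputable def Lf (w : Fin 4 → ℂ) (c : ℂ) (a : Fin 4 → ℝ) : ℂ := c + ∑ j, w j * ((a j : ℂ))

lemma continuous_Ef (t : Fin 4 → ℝ) : Continuous (Ef t) := by
  unfold Ef; fun_prop

lemma continuous_Lf (w : Fin 4 → ℂ) (c : ℂ) : Continuous (Lf w c) := by
  unfold Lf; fun_prop

lemma key_ineq {A : ℝ} (hA : 0 ≤ A) (x : ℝ) : A*|x| ≤ π*x^2 + A^2/(4*π) := by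
  have hπ := Real.pi_pos
  have h4 : (0:ℝ) < 4*π := by positivity
  have key : 4*π*(A*|x|) ≤ 4*π*(π*x^2) + A^2 := by
    have e1 : (0:ℝ) ≤ (2*π*|x| - A)^2 := sq_nonneg _
    have e2 : (2*π*|x| - A)^2 = 4*π*(π*x^2) - 4*π*(A*|x|) + A^2 := by
      linear_combination (4*π^2) * _root_.sq_abs x
    linarith
  have h5 : 4*π*(A^2/(4*π)) = A^2 := by field_simp
  rw [← mul_le_mul_iff_right₀ h4, mul_add, h5]
  linarith

lemma re_aux (c d : ℂ) (x : ℝ) :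
    (-(2*(π:ℂ)) * (x:ℂ)^2 + c*(x:ℂ) + d).re = -(2*π)*x^2 + c.re*x + d.re := by
  simp [Complex.add_re, Complex.mul_re, Complex.ofReal_re, Complex.ofReal_im, pow_two]

lemma pow_le_exp_abs (y : ℝ) (M : ℕ) : (1+|y|)^M ≤ Real.exp (M*|y|) := by
  calc (1+|y|)^M ≤ (Real.exp |y|)^M := by
        apply pow_le_pow_left₀ (by positivity)
        linarith [Real.add_one_le_exp |y|]
    _ = Real.exp (M*|y|) := by rw [← Real.exp_nat_mul]

lemma bound1d (c d : ℂ) (C : ℝ) (M : ℕ) (g : ℝ → ℂ) (hC : 0 ≤ C)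
    (hg : ∀ x, ‖g x‖ ≤ C * (1+|x|)^M) (x : ℝ) :
    ‖Complex.exp (-(2*(π:ℂ)) * (x:ℂ)^2 + c*(x:ℂ) + d) * g x‖ ≤
      (C * Real.exp ((|c.re| + M)^2/(4*π) + d.re)) * Real.exp (-π * x^2) := by
  have h1 : ‖Complex.exp (-(2*(π:ℂ)) * (x:ℂ)^2 + c*(x:ℂ) + d)‖
      = Real.exp (-(2*π)*x^2 + c.re*x + d.re) := by
    rw [Complex.norm_exp, re_aux]
  rw [norm_mul, h1]
  have h3 : ‖g x‖ ≤ C * Real.exp (M*|x|) :=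
    (hg x).trans (mul_le_mul_of_nonneg_left (pow_le_exp_abs x M) hC)
  calc Real.exp (-(2*π)*x^2 + c.re*x + d.re) * ‖g x‖
      ≤ Real.exp (-(2*π)*x^2 + c.re*x + d.re) * (C * Real.exp (M*|x|)) :=
        mul_le_mul_of_nonneg_left h3 (Real.exp_pos _).le
    _ = C * (Real.exp (-(2*π)*x^2 + c.re*x + d.re) * Real.exp ((M:ℝ)*|x|)) := by ring
    _ = C * Real.exp (-(2*π)*x^2 + c.re*x + d.re + M*|x|) := by rw [← Real.exp_add]
    _ ≤ C * Real.exp ((|c.re| + M)^2/(4*π) + d.re + -π*x^2) := by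
        apply mul_le_mul_of_nonneg_left _ hC
        apply Real.exp_le_exp.mpr
        have h4 := key_ineq (A := |c.re| + M) (by positivity) x
        have h5 : c.re * x ≤ |c.re| * |x| := by
          calc c.re * x ≤ |c.re * x| := le_abs_self _
            _ = |c.re| * |x| := abs_mul _ _
        nlinarith [abs_nonneg x, Nat.cast_nonneg (α := ℝ) M]
    _ = (C * Real.exp ((|c.re| + M)^2/(4*π) + d.re)) * Real.exp (-π * x^2) := by
        rw [mul_assoc, ← Real.exp_add]

lemma integrable1d (c d : ℂ) (C : ℝ) (M : ℕ) (g : ℝ → ℂ) (hC : 0 ≤ C) (hgc : Continuous g)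
    (hg : ∀ x, ‖g x‖ ≤ C * (1+|x|)^M) :
    Integrable (fun x : ℝ => Complex.exp (-(2*(π:ℂ)) * (x:ℂ)^2 + c*(x:ℂ) + d) * g x) := by
  refine Integrable.mono' ((integrable_exp_neg_mul_sq Real.pi_pos).const_mul
      (C * Real.exp ((|c.re| + M)^2/(4*π) + d.re))) ?_
      (Eventually.of_forall (bound1d c d C M g hC hg))
  exact ((Complex.continuous_exp.comp (by fun_prop)).mul hgc).aestronglyMeasurable

lemma tendsto_bound_aux (K : ℝ) {l : Filter ℝ} (hl : Tendsto (fun x : ℝ => x^2) l atTop) :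
    Tendsto (fun x : ℝ => K * Real.exp (-π * x^2)) l (𝓝 0) := by
  have h : Tendsto (fun x : ℝ => -(π * x^2)) l atBot :=
    tendsto_neg_atBot_iff.mpr (hl.const_mul_atTop Real.pi_pos)
  have h2 : Tendsto (fun x : ℝ => Real.exp (-π * x^2)) l (𝓝 0) := by
    have h3 := Real.tendsto_exp_atBot.comp h
    apply h3.congr
    intro x
    simp [Function.comp, neg_mul]
  simpa using h2.const_mul K

lemma sq_tendsto_atTop : Tendsto (fun x : ℝ => x^2) atTop atTop :=
  tendsto_pow_atTop two_ne_zero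

lemma sq_tendsto_atBot : Tendsto (fun x : ℝ => x^2) atBot atTop := by
  have h1 : Tendsto (fun y : ℝ => y^2) atTop atTop := tendsto_pow_atTop two_ne_zero
  have h2 : Tendsto (fun x : ℝ => |x|) atBot atTop := tendsto_abs_atBot_atTop
  have h3 : Tendsto (fun x : ℝ => |x|^2) atBot atTop := h1.comp h2
  exact h3.congr fun x => _root_.sq_abs x


lemma one_le_prodR {s : Finset (Fin 4)} (f : Fin 4 → ℝ) (h : ∀ i ∈ s, 1 ≤ f i) :
    1 ≤ ∏ i ∈ s, f i := by
  calc (1:ℝ) = ∏ _i ∈ s, (1:ℝ) := by simp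
    _ ≤ ∏ i ∈ s, f i := Finset.prod_le_prod (fun i _ => zero_le_one) h

lemma one_le_P (a : Fin 4 → ℝ) : 1 ≤ ∏ j, (1+|a j|) :=
  one_le_prodR _ (fun i _ => le_add_of_nonneg_right (abs_nonneg _))

lemma coord_le_P (a : Fin 4 → ℝ) (k : Fin 4) : |a k| ≤ ∏ j, (1+|a j|) := by
  have h1 : (1:ℝ) ≤ ∏ j ∈ Finset.univ.erase k, (1+|a j|) :=
    one_le_prodR _ (fun i _ => le_add_of_nonneg_right (abs_nonneg _))
  have h2 : (1+|a k|) * ∏ j ∈ Finset.univ.erase k, (1+|a j|) = ∏ j, (1+|a j|) :=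
    Finset.mul_prod_erase Finset.univ (fun j => 1+|a j|) (Finset.mem_univ k)
  have h3 := mul_le_mul_of_nonneg_left h1 (by positivity : (0:ℝ) ≤ 1+|a k|)
  have h4 := abs_nonneg (a k)
  nlinarith

lemma re_term (s x : ℝ) :
    (-(2*(π:ℂ)) * (x:ℂ)^2 + (4*(π:ℂ)*Complex.I*((s:ℝ):ℂ)) * (x:ℂ)).re = -(2*π)*x^2 := by
  simp [Complex.add_re, Complex.mul_re, Complex.ofReal_re, Complex.ofReal_im, pow_two]

lemma norm_Ef (t a : Fin 4 → ℝ) : ‖Ef t a‖ = Real.exp (∑ j, -(2*π)*(a j)^2) := by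
  rw [Ef, Complex.norm_exp, Complex.re_sum]
  congr 1
  exact Finset.sum_congr rfl fun j _ => re_term (t j) (a j)

lemma integrable_phi (M : ℕ) :
    Integrable (fun y : ℝ => (1+|y|)^M * Real.exp (-(2*π) * y^2)) := by
  refine Integrable.mono' ((integrable_exp_neg_mul_sq Real.pi_pos).const_mul
      (Real.exp ((M:ℝ)^2/(4*π)))) ?_ (Eventually.of_forall fun y => ?_)
  · apply Continuous.aestronglyMeasurable
    fun_prop
  · rw [Real.norm_eq_abs, _root_.abs_of_nonneg (by positivity)]
    calc (1+|y|)^M * Real.exp (-(2*π)*y^2)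
        ≤ Real.exp ((M:ℝ)*|y|) * Real.exp (-(2*π)*y^2) :=
          mul_le_mul_of_nonneg_right (pow_le_exp_abs y M) (Real.exp_pos _).le
      _ = Real.exp ((M:ℝ)*|y| + -(2*π)*y^2) := (Real.exp_add _ _).symm
      _ ≤ Real.exp ((M:ℝ)^2/(4*π) + -π*y^2) := by
          apply Real.exp_le_exp.mpr
          have := key_ineq (A := (M:ℝ)) (Nat.cast_nonneg M) y
          linarith
      _ = Real.exp ((M:ℝ)^2/(4*π)) * Real.exp (-π * y^2) := by
          rw [← Real.exp_add]

lemma integrable4d (t : Fin 4 → ℝ) (C : ℝ) (M : ℕ) (g : (Fin 4 → ℝ) → ℂ) (hC : 0 ≤ C)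
    (hgc : Continuous g) (hg : ∀ a, ‖g a‖ ≤ C * (∏ j, (1+|a j|))^M) :
    Integrable (fun a : Fin 4 → ℝ => Ef t a * g a) := by
  have hint : Integrable (fun a : Fin 4 → ℝ =>
      C * ∏ j, ((1+|a j|)^M * Real.exp (-(2*π) * (a j)^2))) :=
    (Integrable.fintype_prod (f := fun (_ : Fin 4) (y : ℝ) => (1+|y|)^M * Real.exp (-(2*π)*y^2))
      (fun _ => integrable_phi M)).const_mul C
  refine hint.mono' (((continuous_Ef t).mul hgc).aestronglyMeasurable)
    (Eventually.of_forall fun a => ?_)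
  rw [norm_mul, norm_Ef, Real.exp_sum]
  have hsplit : ∏ j, ((1+|a j|)^M * Real.exp (-(2*π)*(a j)^2))
      = (∏ j, (1+|a j|)^M) * ∏ j, Real.exp (-(2*π)*(a j)^2) := Finset.prod_mul_distrib
  calc (∏ j, Real.exp (-(2*π)*(a j)^2)) * ‖g a‖
      ≤ (∏ j, Real.exp (-(2*π)*(a j)^2)) * (C * (∏ j, (1+|a j|))^M) :=
        mul_le_mul_of_nonneg_left (hg a) (Finset.prod_nonneg fun j _ => (Real.exp_pos _).le)
    _ = C * ∏ j, ((1+|a j|)^M * Real.exp (-(2*π)*(a j)^2)) := by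
        rw [hsplit, ← Finset.prod_pow]
        ring

lemma norm_Lf_le (w : Fin 4 → ℂ) (c : ℂ) (a : Fin 4 → ℝ) :
    ‖Lf w c a‖ ≤ (‖c‖ + ∑ j, ‖w j‖) * ∏ j, (1+|a j|) := by
  calc ‖Lf w c a‖ ≤ ‖c‖ + ∑ j, ‖w j * ((a j : ℝ):ℂ)‖ :=
        (norm_add_le _ _).trans (by gcongr; exact norm_sum_le _ _)
    _ = ‖c‖ + ∑ j, ‖w j‖ * |a j| := by
        congr 1
        exact Finset.sum_congr rfl fun j _ => by
          rw [norm_mul, Complex.norm_real, Real.norm_eq_abs]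
    _ ≤ ‖c‖ * (∏ j, (1+|a j|)) + ∑ j, ‖w j‖ * ∏ i, (1+|a i|) :=
        add_le_add (le_mul_of_one_le_right (norm_nonneg c) (one_le_P a))
          (Finset.sum_le_sum fun j _ => mul_le_mul_of_nonneg_left (coord_le_P a j) (norm_nonneg _))
    _ = (‖c‖ + ∑ j, ‖w j‖) * ∏ j, (1+|a j|) := by
        rw [← Finset.sum_mul]
        ring

lemma norm_LfPow_le (w : Fin 4 → ℂ) (c : ℂ) (a : Fin 4 → ℝ) (r : ℕ) :
    ‖Lf w c a ^ r‖ ≤ (‖c‖ + ∑ j, ‖w j‖)^r * (∏ j, (1+|a j|))^r := by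
  rw [norm_pow, ← mul_pow]
  exact pow_le_pow_left₀ (norm_nonneg _) (norm_Lf_le w c a) r

lemma integrable_FF (t : Fin 4 → ℝ) (u v : Fin 4 → ℂ) (c1 c2 : ℂ) (r s : ℕ) :
    Integrable (fun a : Fin 4 → ℝ => Ef t a * (Lf u c1 a ^ r * Lf v c2 a ^ s)) := by
  apply integrable4d t ((‖c1‖ + ∑ j, ‖u j‖)^r * (‖c2‖ + ∑ j, ‖v j‖)^s) (r+s) _
    (by positivity) (((continuous_Lf u c1).pow r).mul ((continuous_Lf v c2).pow s))
  intro a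
  rw [Pi.mul_apply, Pi.pow_apply, Pi.pow_apply, norm_mul, pow_add]
  calc ‖Lf u c1 a ^ r‖ * ‖Lf v c2 a ^ s‖
      ≤ ((‖c1‖ + ∑ j, ‖u j‖)^r * (∏ j, (1+|a j|))^r)
        * ((‖c2‖ + ∑ j, ‖v j‖)^s * (∏ j, (1+|a j|))^s) :=
        mul_le_mul (norm_LfPow_le u c1 a r) (norm_LfPow_le v c2 a s) (norm_nonneg _)
          (by positivity)
    _ = (‖c1‖ + ∑ j, ‖u j‖)^r * (‖c2‖ + ∑ j, ‖v j‖)^s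
        * ((∏ j, (1+|a j|))^r * (∏ j, (1+|a j|))^s) := by ring

lemma integrable_coordFF (t : Fin 4 → ℝ) (u v : Fin 4 → ℂ) (c1 c2 : ℂ) (k : Fin 4) (r s : ℕ) :
    Integrable (fun a : Fin 4 → ℝ =>
      Ef t a * (((a k : ℝ):ℂ) * (Lf u c1 a ^ r * Lf v c2 a ^ s))) := by
  refine integrable4d t ((‖c1‖ + ∑ j, ‖u j‖)^r * (‖c2‖ + ∑ j, ‖v j‖)^s) (r+s+1)
    (fun a => ((a k : ℝ):ℂ) * (Lf u c1 a ^ r * Lf v c2 a ^ s))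
    (by positivity) ?_ ?_
  · exact ((Complex.continuous_ofReal.comp (continuous_apply k)).mul
      (((continuous_Lf u c1).pow r).mul ((continuous_Lf v c2).pow s)))
  intro a
  rw [norm_mul, norm_mul, Complex.norm_real, Real.norm_eq_abs, pow_add, pow_add, pow_one]
  have h1 : ‖Lf u c1 a ^ r‖ * ‖Lf v c2 a ^ s‖
      ≤ (‖c1‖ + ∑ j, ‖u j‖)^r * (‖c2‖ + ∑ j, ‖v j‖)^s
        * ((∏ j, (1+|a j|))^r * (∏ j, (1+|a j|))^s) := by
    calc ‖Lf u c1 a ^ r‖ * ‖Lf v c2 a ^ s‖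
        ≤ ((‖c1‖ + ∑ j, ‖u j‖)^r * (∏ j, (1+|a j|))^r)
          * ((‖c2‖ + ∑ j, ‖v j‖)^s * (∏ j, (1+|a j|))^s) :=
          mul_le_mul (norm_LfPow_le u c1 a r) (norm_LfPow_le v c2 a s) (norm_nonneg _)
            (by positivity)
      _ = _ := by ring
  calc |a k| * (‖Lf u c1 a ^ r‖ * ‖Lf v c2 a ^ s‖)
      ≤ (∏ j, (1+|a j|)) * ((‖c1‖ + ∑ j, ‖u j‖)^r * (‖c2‖ + ∑ j, ‖v j‖)^s
          * ((∏ j, (1+|a j|))^r * (∏ j, (1+|a j|))^s)) :=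
        mul_le_mul (coord_le_P a k) h1 (by positivity) (by positivity)
    _ = (‖c1‖ + ∑ j, ‖u j‖)^r * (‖c2‖ + ∑ j, ‖v j‖)^s
        * ((∏ j, (1+|a j|))^r * (∏ j, (1+|a j|))^s * (∏ j, (1+|a j|))) := by ring

/-- The function whose integral vanishes by integration by parts in the `k`-th coordinate. -/
noncomputable def Dk (t : Fin 4 → ℝ) (u v : Fin 4 → ℂ) (c1 c2 : ℂ) (k : Fin 4) (r s : ℕ)
    (a : Fin 4 → ℝ) : ℂ :=
  Ef t a * (((4*(π:ℂ)*Complex.I*((t k):ℂ)) - 4*(π:ℂ)*((a k):ℂ)) * (Lf u c1 a ^ r * Lf v c2 a ^ s)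
    + (r:ℂ) * u k * (Lf u c1 a ^ (r-1) * Lf v c2 a ^ s)
    + (s:ℂ) * v k * (Lf u c1 a ^ r * Lf v c2 a ^ (s-1)))

lemma integrable_Dk (t : Fin 4 → ℝ) (u v : Fin 4 → ℂ) (c1 c2 : ℂ) (k : Fin 4) (r s : ℕ) :
    Integrable (Dk t u v c1 c2 k r s) := by
  have hrw : Dk t u v c1 c2 k r s = fun a =>
      (4*(π:ℂ)*Complex.I*((t k):ℂ)) * (Ef t a * (Lf u c1 a ^ r * Lf v c2 a ^ s))
      - (4*(π:ℂ)) * (Ef t a * (((a k : ℝ):ℂ) * (Lf u c1 a ^ r * Lf v c2 a ^ s)))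
      + ((r:ℂ) * u k) * (Ef t a * (Lf u c1 a ^ (r-1) * Lf v c2 a ^ s))
      + ((s:ℂ) * v k) * (Ef t a * (Lf u c1 a ^ r * Lf v c2 a ^ (s-1))) := by
    funext a
    unfold Dk
    ring
  rw [hrw]
  exact ((((integrable_FF t u v c1 c2 r s).const_mul _).sub
      ((integrable_coordFF t u v c1 c2 k r s).const_mul _)).add
      ((integrable_FF t u v c1 c2 (r-1) s).const_mul _)).add
      ((integrable_FF t u v c1 c2 r (s-1)).const_mul _)


lemma norm_affine_pow (p q : ℂ) (n : ℕ) (x : ℝ) :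
    ‖(p + q*(x:ℂ))^n‖ ≤ (‖p‖+‖q‖)^n * (1+|x|)^n := by
  rw [norm_pow, ← mul_pow]
  apply pow_le_pow_left₀ (norm_nonneg _)
  have h1 : ‖p + q*(x:ℂ)‖ ≤ ‖p‖ + ‖q‖*|x| := by
    refine (norm_add_le _ _).trans ?_
    rw [norm_mul, Complex.norm_real, Real.norm_eq_abs]
  nlinarith [norm_nonneg p, norm_nonneg q, abs_nonneg x]

lemma norm_affine_pow_mul (p1 q1 p2 q2 : ℂ) (r s : ℕ) (x : ℝ) :
    ‖(p1 + q1*(x:ℂ))^r * (p2 + q2*(x:ℂ))^s‖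
      ≤ ((‖p1‖+‖q1‖)^r * (‖p2‖+‖q2‖)^s) * (1+|x|)^(r+s) := by
  rw [norm_mul, pow_add]
  calc ‖(p1 + q1*(x:ℂ))^r‖ * ‖(p2 + q2*(x:ℂ))^s‖
      ≤ ((‖p1‖+‖q1‖)^r * (1+|x|)^r) * ((‖p2‖+‖q2‖)^s * (1+|x|)^s) :=
        mul_le_mul (norm_affine_pow p1 q1 r x) (norm_affine_pow p2 q2 s x) (norm_nonneg _)
          (by positivity)
    _ = _ := by ring

lemma one_add_abs_pow_le (x : ℝ) {m n : ℕ} (h : m ≤ n) : (1+|x|)^m ≤ (1+|x|)^n :=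
  pow_le_pow_right₀ (by linarith [abs_nonneg x]) h

lemma integral_Dk (t : Fin 4 → ℝ) (u v : Fin 4 → ℂ) (c1 c2 : ℂ) (k : Fin 4) (r s : ℕ) :
    ∫ a : Fin 4 → ℝ, Dk t u v c1 c2 k r s a = 0 := by
  set e := MeasurableEquiv.piFinSuccAbove (fun _ : Fin 4 => ℝ) k with he
  have hmp : MeasurePreserving e volume volume :=
    MeasureTheory.volume_preserving_piFinSuccAbove (fun _ : Fin 4 => ℝ) k
  have hGint : Integrable (Dk t u v c1 c2 k r s) := integrable_Dk t u v c1 c2 k r s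
  have h1 : ∫ p : ℝ × (Fin 3 → ℝ), Dk t u v c1 c2 k r s (e.symm p)
      = ∫ a : Fin 4 → ℝ, Dk t u v c1 c2 k r s a :=
    (hmp.symm e).integral_comp' _
  have hGint2 : Integrable (fun p : ℝ × (Fin 3 → ℝ) => Dk t u v c1 c2 k r s (e.symm p)) :=
    ((hmp.symm e).integrable_comp_emb e.symm.measurableEmbedding).mpr hGint
  rw [← h1]
  rw [MeasureTheory.Measure.volume_eq_prod] at hGint2 ⊢
  rw [MeasureTheory.integral_prod_symm _ hGint2]
  have hinner : ∀ b : Fin 3 → ℝ,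
      (∫ x : ℝ, Dk t u v c1 c2 k r s (e.symm (x, b))) = 0 := by
    intro b
    have hsymm : ∀ x : ℝ, e.symm (x, b) = k.insertNth x b := fun x => by
      simp [he, MeasurableEquiv.piFinSuccAbove_symm_apply, Fin.insertNthEquiv]
    set Ce : ℂ := ∑ j : Fin 3,
        (-(2*(π:ℂ)) * ((b j : ℝ):ℂ)^2
          + (4*(π:ℂ)*Complex.I*((t (k.succAbove j)):ℂ)) * ((b j : ℝ):ℂ)) with hCe
    set w1 : ℂ := 4*(π:ℂ)*Complex.I*((t k):ℂ) with hw1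
    set C1 : ℂ := c1 + ∑ j : Fin 3, u (k.succAbove j) * ((b j : ℝ):ℂ) with hC1
    set C2 : ℂ := c2 + ∑ j : Fin 3, v (k.succAbove j) * ((b j : ℝ):ℂ) with hC2
    have hEf : ∀ x : ℝ, Ef t (k.insertNth x b)
        = Complex.exp (-(2*(π:ℂ)) * (x:ℂ)^2 + w1*(x:ℂ) + Ce) := by
      intro x
      unfold Ef
      congr 1
      rw [Fin.sum_univ_succAbove _ k]
      simp only [Fin.insertNth_apply_same, Fin.insertNth_apply_succAbove, hCe, hw1]
      try ring
    have hLu : ∀ x : ℝ, Lf u c1 (k.insertNth x b) = C1 + u k * (x:ℂ) := by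
      intro x
      unfold Lf
      rw [Fin.sum_univ_succAbove _ k]
      simp only [Fin.insertNth_apply_same, Fin.insertNth_apply_succAbove, hC1]
      try ring
    have hLv : ∀ x : ℝ, Lf v c2 (k.insertNth x b) = C2 + v k * (x:ℂ) := by
      intro x
      unfold Lf
      rw [Fin.sum_univ_succAbove _ k]
      simp only [Fin.insertNth_apply_same, Fin.insertNth_apply_succAbove, hC2]
      try ring
    set φ : ℝ → ℂ := fun x =>
      Complex.exp (-(2*(π:ℂ)) * (x:ℂ)^2 + w1*(x:ℂ) + Ce)
        * ((C1 + u k * (x:ℂ))^r * (C2 + v k * (x:ℂ))^s) with hφ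
    set φ' : ℝ → ℂ := fun x =>
      Complex.exp (-(2*(π:ℂ)) * (x:ℂ)^2 + w1*(x:ℂ) + Ce) *
        ((w1 - 4*(π:ℂ)*(x:ℂ)) * ((C1 + u k * (x:ℂ))^r * (C2 + v k * (x:ℂ))^s)
          + (r:ℂ) * u k * ((C1 + u k * (x:ℂ))^(r-1) * (C2 + v k * (x:ℂ))^s)
          + (s:ℂ) * v k * ((C1 + u k * (x:ℂ))^r * (C2 + v k * (x:ℂ))^(s-1))) with hφ'
    have hGφ : ∀ x : ℝ, Dk t u v c1 c2 k r s (e.symm (x, b)) = φ' x := by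
      intro x
      rw [hsymm x]
      unfold Dk
      rw [hEf, hLu, hLv, Fin.insertNth_apply_same]
    have hderiv : ∀ x : ℝ, HasDerivAt φ (φ' x) x := by
      intro x
      have h1 : HasDerivAt (fun z : ℂ => -(2*(π:ℂ)) * z^2 + w1*z + Ce)
          (-(2*(π:ℂ)) * (2*(x:ℂ)^1) + w1) (x:ℂ) := by
        have ha : HasDerivAt (fun z : ℂ => z^2) (2*(x:ℂ)^1) (x:ℂ) := by
          simpa using hasDerivAt_pow 2 (x:ℂ)
        have hb : HasDerivAt (fun z : ℂ => w1*z) w1 (x:ℂ) := by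
          simpa using (hasDerivAt_id (x:ℂ)).const_mul w1
        exact ((ha.const_mul (-(2*(π:ℂ)))).add hb).add_const Ce
      have h2 := h1.cexp
      have h3 : HasDerivAt (fun z : ℂ => (C1 + u k * z)^r)
          ((r:ℂ) * (C1 + u k*(x:ℂ))^(r-1) * u k) (x:ℂ) := by
        have : HasDerivAt (fun z : ℂ => C1 + u k * z) (u k) (x:ℂ) := by
          simpa using ((hasDerivAt_id (x:ℂ)).const_mul (u k)).const_add C1
        exact this.pow r
      have h4 : HasDerivAt (fun z : ℂ => (C2 + v k * z)^s)
          ((s:ℂ) * (C2 + v k*(x:ℂ))^(s-1) * v k) (x:ℂ) := by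
        have : HasDerivAt (fun z : ℂ => C2 + v k * z) (v k) (x:ℂ) := by
          simpa using ((hasDerivAt_id (x:ℂ)).const_mul (v k)).const_add C2
        exact this.pow s
      have h5 := (h2.mul (h3.mul h4)).comp_ofReal
      convert h5 using 1
      · rfl
      simp only [hφ', hφ, Pi.mul_apply]
      push_cast
      ring
    -- bounds
    have hbφ : ∀ x : ℝ, ‖(C1 + u k * (x:ℂ))^r * (C2 + v k * (x:ℂ))^s‖
        ≤ ((‖C1‖+‖u k‖)^r * (‖C2‖+‖v k‖)^s) * (1+|x|)^(r+s) :=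
      fun x => norm_affine_pow_mul C1 (u k) C2 (v k) r s x
    have hφint : Integrable φ := by
      rw [hφ]
      exact integrable1d w1 Ce ((‖C1‖+‖u k‖)^r * (‖C2‖+‖v k‖)^s) (r+s) _
        (by positivity) (by fun_prop) hbφ
    have hbφ' : ∀ x : ℝ,
        ‖(w1 - 4*(π:ℂ)*(x:ℂ)) * ((C1 + u k * (x:ℂ))^r * (C2 + v k * (x:ℂ))^s)
          + (r:ℂ) * u k * ((C1 + u k * (x:ℂ))^(r-1) * (C2 + v k * (x:ℂ))^s)
          + (s:ℂ) * v k * ((C1 + u k * (x:ℂ))^r * (C2 + v k * (x:ℂ))^(s-1))‖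
        ≤ ((‖w1‖ + 4*π) * ((‖C1‖+‖u k‖)^r * (‖C2‖+‖v k‖)^s)
            + (r:ℝ) * ‖u k‖ * ((‖C1‖+‖u k‖)^(r-1) * (‖C2‖+‖v k‖)^s)
            + (s:ℝ) * ‖v k‖ * ((‖C1‖+‖u k‖)^r * (‖C2‖+‖v k‖)^(s-1)))
          * (1+|x|)^(r+s+1) := by
      intro x
      have hx1 : (1:ℝ) ≤ 1+|x| := by linarith [abs_nonneg x]
      have e1 : ‖(w1 - 4*(π:ℂ)*(x:ℂ)) * ((C1 + u k * (x:ℂ))^r * (C2 + v k * (x:ℂ))^s)‖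
          ≤ ((‖w1‖ + 4*π) * ((‖C1‖+‖u k‖)^r * (‖C2‖+‖v k‖)^s)) * (1+|x|)^(r+s+1) := by
        rw [norm_mul]
        have ha : ‖w1 - 4*(π:ℂ)*(x:ℂ)‖ ≤ (‖w1‖ + 4*π) * (1+|x|) := by
          refine (norm_sub_le _ _).trans ?_
          have : ‖4*(π:ℂ)*(x:ℂ)‖ = 4*π*|x| := by
            rw [norm_mul, norm_mul, Complex.norm_real, Real.norm_eq_abs]
            simp [abs_of_pos Real.pi_pos]
          rw [this]
          nlinarith [norm_nonneg w1, abs_nonneg x, Real.pi_pos]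
        calc ‖w1 - 4*(π:ℂ)*(x:ℂ)‖ * ‖(C1 + u k * (x:ℂ))^r * (C2 + v k * (x:ℂ))^s‖
            ≤ ((‖w1‖ + 4*π) * (1+|x|))
              * (((‖C1‖+‖u k‖)^r * (‖C2‖+‖v k‖)^s) * (1+|x|)^(r+s)) :=
              mul_le_mul ha (hbφ x) (norm_nonneg _) (by positivity)
          _ = ((‖w1‖ + 4*π) * ((‖C1‖+‖u k‖)^r * (‖C2‖+‖v k‖)^s))
              * ((1+|x|)^(r+s) * (1+|x|)) := by ring
          _ = ((‖w1‖ + 4*π) * ((‖C1‖+‖u k‖)^r * (‖C2‖+‖v k‖)^s)) * (1+|x|)^(r+s+1) := by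
              rw [← pow_succ]
      have e2 : ‖(r:ℂ) * u k * ((C1 + u k * (x:ℂ))^(r-1) * (C2 + v k * (x:ℂ))^s)‖
          ≤ ((r:ℝ) * ‖u k‖ * ((‖C1‖+‖u k‖)^(r-1) * (‖C2‖+‖v k‖)^s)) * (1+|x|)^(r+s+1) := by
        rw [norm_mul, norm_mul]
        have hr : ‖(r:ℂ)‖ = (r:ℝ) := by
          simp
        rw [hr]
        calc (r:ℝ) * ‖u k‖ * ‖(C1 + u k * (x:ℂ))^(r-1) * (C2 + v k * (x:ℂ))^s‖
            ≤ (r:ℝ) * ‖u k‖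
              * (((‖C1‖+‖u k‖)^(r-1) * (‖C2‖+‖v k‖)^s) * (1+|x|)^((r-1)+s)) := by
              apply mul_le_mul_of_nonneg_left (norm_affine_pow_mul C1 (u k) C2 (v k) (r-1) s x)
              positivity
          _ ≤ (r:ℝ) * ‖u k‖
              * (((‖C1‖+‖u k‖)^(r-1) * (‖C2‖+‖v k‖)^s) * (1+|x|)^(r+s+1)) := by
              apply mul_le_mul_of_nonneg_left _ (by positivity)
              apply mul_le_mul_of_nonneg_left (one_add_abs_pow_le x (by omega)) (by positivity)
          _ = ((r:ℝ) * ‖u k‖ * ((‖C1‖+‖u k‖)^(r-1) * (‖C2‖+‖v k‖)^s)) * (1+|x|)^(r+s+1) := by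
              ring
      have e3 : ‖(s:ℂ) * v k * ((C1 + u k * (x:ℂ))^r * (C2 + v k * (x:ℂ))^(s-1))‖
          ≤ ((s:ℝ) * ‖v k‖ * ((‖C1‖+‖u k‖)^r * (‖C2‖+‖v k‖)^(s-1))) * (1+|x|)^(r+s+1) := by
        rw [norm_mul, norm_mul]
        have hs : ‖(s:ℂ)‖ = (s:ℝ) := by
          simp
        rw [hs]
        calc (s:ℝ) * ‖v k‖ * ‖(C1 + u k * (x:ℂ))^r * (C2 + v k * (x:ℂ))^(s-1)‖
            ≤ (s:ℝ) * ‖v k‖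
              * (((‖C1‖+‖u k‖)^r * (‖C2‖+‖v k‖)^(s-1)) * (1+|x|)^(r+(s-1))) := by
              apply mul_le_mul_of_nonneg_left (norm_affine_pow_mul C1 (u k) C2 (v k) r (s-1) x)
              positivity
          _ ≤ (s:ℝ) * ‖v k‖
              * (((‖C1‖+‖u k‖)^r * (‖C2‖+‖v k‖)^(s-1)) * (1+|x|)^(r+s+1)) := by
              apply mul_le_mul_of_nonneg_left _ (by positivity)
              apply mul_le_mul_of_nonneg_left (one_add_abs_pow_le x (by omega)) (by positivity)
          _ = ((s:ℝ) * ‖v k‖ * ((‖C1‖+‖u k‖)^r * (‖C2‖+‖v k‖)^(s-1))) * (1+|x|)^(r+s+1) := by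
              ring
      refine le_trans (norm_add_le _ _) (le_trans (add_le_add_left (norm_add_le _ _) _) ?_)
      refine le_trans (add_le_add (add_le_add e1 e2) e3) ?_
      apply le_of_eq
      ring
    have hφ'int : Integrable φ' := by
      rw [hφ']
      refine integrable1d w1 Ce _ (r+s+1) _ ?_ (by fun_prop) hbφ'
      have hπ := Real.pi_pos
      positivity
    have htop : Tendsto φ atTop (𝓝 0) := by
      rw [hφ]
      exact squeeze_zero_norm
        (bound1d w1 Ce ((‖C1‖+‖u k‖)^r * (‖C2‖+‖v k‖)^s) (r+s) _ (by positivity) hbφ)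
        (tendsto_bound_aux _ sq_tendsto_atTop)
    have hbot : Tendsto φ atBot (𝓝 0) := by
      rw [hφ]
      exact squeeze_zero_norm
        (bound1d w1 Ce ((‖C1‖+‖u k‖)^r * (‖C2‖+‖v k‖)^s) (r+s) _ (by positivity) hbφ)
        (tendsto_bound_aux _ sq_tendsto_atBot)
    have h0 : (∫ x : ℝ, φ' x) = 0 := by
      have hIic : ∫ x in Set.Iic (0:ℝ), φ' x = φ 0 - 0 :=
        integral_Iic_of_hasDerivAt_of_tendsto' (fun x _ => hderiv x)
          (hφ'int.integrableOn) hbot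
      have hIoi : ∫ x in Set.Ioi (0:ℝ), φ' x = 0 - φ 0 :=
        integral_Ioi_of_hasDerivAt_of_tendsto' (fun x _ => hderiv x)
          (hφ'int.integrableOn) htop
      have hsplit := intervalIntegral.integral_Iic_add_Ioi (b := (0:ℝ))
        (hφ'int.integrableOn) (hφ'int.integrableOn)
      rw [hIic, hIoi] at hsplit
      rw [← hsplit]
      ring
    calc (∫ x : ℝ, Dk t u v c1 c2 k r s (e.symm (x, b))) = ∫ x : ℝ, φ' x := by
          apply MeasureTheory.integral_congr_ae
          exact Eventually.of_forall hGφ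
      _ = 0 := h0
  rw [MeasureTheory.integral_congr_ae (Eventually.of_forall hinner)]
  simp


lemma pi_ne' : (4*(π:ℂ)) ≠ 0 := by
  simp [Real.pi_ne_zero, Complex.ofReal_ne_zero]

lemma step_r (t : Fin 4 → ℝ) (u v : Fin 4 → ℂ) (c1 c2 : ℂ)
    (hu : ∑ j, u j ^ 2 = 0) (huv : ∑ j, u j * v j = 0) (r s : ℕ) :
    ∫ a : Fin 4 → ℝ, Ef t a * (Lf u c1 a ^ (r+1) * Lf v c2 a ^ s)
      = (c1 + Complex.I * ∑ j, u j * ((t j):ℂ))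
        * ∫ a : Fin 4 → ℝ, Ef t a * (Lf u c1 a ^ r * Lf v c2 a ^ s) := by
  have key : (∫ a : Fin 4 → ℝ, ∑ k, u k * Dk t u v c1 c2 k r s a) = 0 := by
    rw [MeasureTheory.integral_finset_sum Finset.univ
      (fun k _ => (integrable_Dk t u v c1 c2 k r s).const_mul (u k))]
    simp [MeasureTheory.integral_const_mul, integral_Dk]
  have hpt : ∀ a : Fin 4 → ℝ, (∑ k, u k * Dk t u v c1 c2 k r s a)
      = (4*(π:ℂ)) * ((c1 + Complex.I * ∑ j, u j * ((t j):ℂ))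
          * (Ef t a * (Lf u c1 a ^ r * Lf v c2 a ^ s))
        - Ef t a * (Lf u c1 a ^ (r+1) * Lf v c2 a ^ s)) := by
    intro a
    have expand : ∀ k, u k * Dk t u v c1 c2 k r s a =
        (4*(π:ℂ)*Complex.I) * (Ef t a * (Lf u c1 a ^ r * Lf v c2 a ^ s)) * (u k * ((t k):ℂ))
        - (4*(π:ℂ)) * (Ef t a * (Lf u c1 a ^ r * Lf v c2 a ^ s)) * (u k * ((a k : ℝ):ℂ))
        + ((r:ℂ) * (Ef t a * (Lf u c1 a ^ (r-1) * Lf v c2 a ^ s))) * (u k)^2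
        + ((s:ℂ) * (Ef t a * (Lf u c1 a ^ r * Lf v c2 a ^ (s-1)))) * (u k * v k) := by
      intro k
      unfold Dk
      ring
    rw [Finset.sum_congr rfl fun k _ => expand k]
    rw [Finset.sum_add_distrib, Finset.sum_add_distrib, Finset.sum_sub_distrib,
      ← Finset.mul_sum, ← Finset.mul_sum, ← Finset.mul_sum, ← Finset.mul_sum, hu, huv,
      mul_zero, mul_zero, add_zero, add_zero]
    have hLa : ∑ k, u k * ((a k : ℝ):ℂ) = Lf u c1 a - c1 := by
      unfold Lf
      ring
    rw [hLa, pow_succ]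
    ring
  rw [MeasureTheory.integral_congr_ae (Eventually.of_forall hpt)] at key
  rw [MeasureTheory.integral_const_mul, MeasureTheory.integral_sub
    ((integrable_FF t u v c1 c2 r s).const_mul _) (integrable_FF t u v c1 c2 (r+1) s),
    MeasureTheory.integral_const_mul] at key
  have h2 := (mul_eq_zero.mp key).resolve_left pi_ne'
  exact (sub_eq_zero.mp h2).symm

lemma step_s (t : Fin 4 → ℝ) (u v : Fin 4 → ℂ) (c1 c2 : ℂ)
    (hv : ∑ j, v j ^ 2 = 0) (huv : ∑ j, u j * v j = 0) (r s : ℕ) :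
    ∫ a : Fin 4 → ℝ, Ef t a * (Lf u c1 a ^ r * Lf v c2 a ^ (s+1))
      = (c2 + Complex.I * ∑ j, v j * ((t j):ℂ))
        * ∫ a : Fin 4 → ℝ, Ef t a * (Lf u c1 a ^ r * Lf v c2 a ^ s) := by
  have key : (∫ a : Fin 4 → ℝ, ∑ k, v k * Dk t u v c1 c2 k r s a) = 0 := by
    rw [MeasureTheory.integral_finset_sum Finset.univ
      (fun k _ => (integrable_Dk t u v c1 c2 k r s).const_mul (v k))]
    simp [MeasureTheory.integral_const_mul, integral_Dk]
  have hpt : ∀ a : Fin 4 → ℝ, (∑ k, v k * Dk t u v c1 c2 k r s a)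
      = (4*(π:ℂ)) * ((c2 + Complex.I * ∑ j, v j * ((t j):ℂ))
          * (Ef t a * (Lf u c1 a ^ r * Lf v c2 a ^ s))
        - Ef t a * (Lf u c1 a ^ r * Lf v c2 a ^ (s+1))) := by
    intro a
    have expand : ∀ k, v k * Dk t u v c1 c2 k r s a =
        (4*(π:ℂ)*Complex.I) * (Ef t a * (Lf u c1 a ^ r * Lf v c2 a ^ s)) * (v k * ((t k):ℂ))
        - (4*(π:ℂ)) * (Ef t a * (Lf u c1 a ^ r * Lf v c2 a ^ s)) * (v k * ((a k : ℝ):ℂ))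
        + ((r:ℂ) * (Ef t a * (Lf u c1 a ^ (r-1) * Lf v c2 a ^ s))) * (u k * v k)
        + ((s:ℂ) * (Ef t a * (Lf u c1 a ^ r * Lf v c2 a ^ (s-1)))) * (v k)^2 := by
      intro k
      unfold Dk
      ring
    rw [Finset.sum_congr rfl fun k _ => expand k]
    rw [Finset.sum_add_distrib, Finset.sum_add_distrib, Finset.sum_sub_distrib,
      ← Finset.mul_sum, ← Finset.mul_sum, ← Finset.mul_sum, ← Finset.mul_sum, hv, huv,
      mul_zero, mul_zero, add_zero, add_zero]
    have hLa : ∑ k, v k * ((a k : ℝ):ℂ) = Lf v c2 a - c2 := by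
      unfold Lf
      ring
    rw [hLa, pow_succ]
    ring
  rw [MeasureTheory.integral_congr_ae (Eventually.of_forall hpt)] at key
  rw [MeasureTheory.integral_const_mul, MeasureTheory.integral_sub
    ((integrable_FF t u v c1 c2 r s).const_mul _) (integrable_FF t u v c1 c2 r (s+1)),
    MeasureTheory.integral_const_mul] at key
  have h2 := (mul_eq_zero.mp key).resolve_left pi_ne'
  exact (sub_eq_zero.mp h2).symm

lemma J00 (t : Fin 4 → ℝ) :
    ∫ a : Fin 4 → ℝ, Ef t a
      = Complex.exp (-(2*(π:ℂ)) * ∑ j, ((t j):ℂ)^2) / 4 := by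
  have hsplit : ∀ a : Fin 4 → ℝ, Ef t a = ∏ j, Complex.exp
      (-(2*(π:ℂ)) * ((a j : ℝ):ℂ)^2 + (4*(π:ℂ)*Complex.I*((t j):ℂ)) * ((a j : ℝ):ℂ) + 0) := by
    intro a
    rw [Ef, Complex.exp_sum]
    exact Finset.prod_congr rfl fun j _ => by rw [add_zero]
  rw [MeasureTheory.integral_congr_ae (Eventually.of_forall hsplit)]
  rw [MeasureTheory.integral_fintype_prod_volume_eq_prod
    (f := fun j (y : ℝ) => Complex.exp
      (-(2*(π:ℂ)) * (y:ℂ)^2 + (4*(π:ℂ)*Complex.I*((t j):ℂ)) * (y:ℂ) + 0))]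
  have hb : (-(2*(π:ℂ))).re < 0 := by
    simp [Real.pi_pos]
  have hone : ∀ j : Fin 4, (∫ y : ℝ, Complex.exp
      (-(2*(π:ℂ)) * (y:ℂ)^2 + (4*(π:ℂ)*Complex.I*((t j):ℂ)) * (y:ℂ) + 0))
      = (((π:ℂ) / -(-(2*(π:ℂ)))) ^ (1/2 : ℂ)) * Complex.exp (-(2*(π:ℂ)) * ((t j):ℂ)^2) := by
    intro j
    rw [integral_cexp_quadratic hb]
    congr 1
    have hexp : (0:ℂ) - (4*(π:ℂ)*Complex.I*((t j):ℂ))^2 / (4 * (-(2*(π:ℂ))))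
        = -(2*(π:ℂ)) * ((t j):ℂ)^2 := by
      have hπ : (π:ℂ) ≠ 0 := Complex.ofReal_ne_zero.mpr Real.pi_ne_zero
      field_simp
      linear_combination (4*(π:ℂ)*((t j):ℂ)^2) * Complex.I_sq
    rw [hexp]
  rw [Finset.prod_congr rfl fun j _ => hone j, Finset.prod_mul_distrib, Finset.prod_const,
    ← Complex.exp_sum]
  have hcard : (Finset.univ : Finset (Fin 4)).card = 4 := by simp
  rw [hcard]
  have hpow : (((π:ℂ) / -(-(2*(π:ℂ)))) ^ (1/2 : ℂ))^(4:ℕ) = 1/4 := by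
    have h1 : ((π:ℂ) / -(-(2*(π:ℂ)))) = ((1/2:ℝ):ℂ) := by
      rw [neg_neg]
      have hπ : (π:ℂ) ≠ 0 := Complex.ofReal_ne_zero.mpr Real.pi_ne_zero
      field_simp
      ring
      norm_num
    have h2 : (1/2:ℂ) = ((1/2:ℝ):ℂ) := by norm_num
    rw [h1, h2, ← Complex.ofReal_cpow (by norm_num) (1/2:ℝ), ← Complex.ofReal_pow]
    have h3 : ((1/2:ℝ) ^ ((1/2):ℝ))^(4:ℕ) = 1/4 := by
      rw [← Real.rpow_natCast ((1/2:ℝ) ^ ((1/2):ℝ)) 4,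
        ← Real.rpow_mul (by norm_num : (0:ℝ) ≤ 1/2)]
      norm_num
    rw [h3]
    norm_num
  rw [hpow]
  have hsum : ∑ j, (-(2*(π:ℂ)) * ((t j):ℂ)^2) = -(2*(π:ℂ)) * ∑ j, ((t j):ℂ)^2 :=
    (Finset.mul_sum _ _ _).symm
  rw [hsum]
  ring

lemma Jrs (t : Fin 4 → ℝ) (u v : Fin 4 → ℂ) (c1 c2 : ℂ)
    (hu : ∑ j, u j ^ 2 = 0) (hv : ∑ j, v j ^ 2 = 0) (huv : ∑ j, u j * v j = 0) (r s : ℕ) :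
    ∫ a : Fin 4 → ℝ, Ef t a * (Lf u c1 a ^ r * Lf v c2 a ^ s)
      = (c1 + Complex.I * ∑ j, u j * ((t j):ℂ))^r
        * (c2 + Complex.I * ∑ j, v j * ((t j):ℂ))^s
        * (Complex.exp (-(2*(π:ℂ)) * ∑ j, ((t j):ℂ)^2) / 4) := by
  induction r with
  | zero =>
    induction s with
    | zero =>
      simp only [pow_zero, one_mul, mul_one]
      exact J00 t
    | succ s ih =>
      rw [step_s t u v c1 c2 hv huv 0 s, ih]
      ring
  | succ r ih =>
    rw [step_r t u v c1 c2 hu huv r s, ih]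
    ring


theorem master (t : Fin 4 → ℝ) (u v : Fin 4 → ℂ) (c1 c2 : ℂ)
    (hu : ∑ j, u j ^ 2 = 0) (hv : ∑ j, v j ^ 2 = 0) (huv : ∑ j, u j * v j = 0)
    (P : MvPolynomial (Fin 2) ℂ) :
    (∫ a : Fin 4 → ℝ, Ef t a * MvPolynomial.eval ![Lf u c1 a, Lf v c2 a] P)
      = MvPolynomial.eval ![c1 + Complex.I * ∑ j, u j * ((t j):ℂ),
          c2 + Complex.I * ∑ j, v j * ((t j):ℂ)] P
        * (Complex.exp (-(2*(π:ℂ)) * ∑ j, ((t j):ℂ)^2) / 4) := by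
  have hpt : ∀ a : Fin 4 → ℝ, Ef t a * MvPolynomial.eval ![Lf u c1 a, Lf v c2 a] P
      = ∑ d ∈ P.support, MvPolynomial.coeff d P
          * (Ef t a * (Lf u c1 a ^ d 0 * Lf v c2 a ^ d 1)) := by
    intro a
    rw [MvPolynomial.eval_eq', Finset.mul_sum]
    refine Finset.sum_congr rfl fun d _ => ?_
    rw [Fin.prod_univ_two]
    have h0 : (![Lf u c1 a, Lf v c2 a] : Fin 2 → ℂ) 0 = Lf u c1 a := rfl
    have h1 : (![Lf u c1 a, Lf v c2 a] : Fin 2 → ℂ) 1 = Lf v c2 a := rfl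
    rw [h0, h1]
    ring
  rw [MeasureTheory.integral_congr_ae (Eventually.of_forall hpt),
    MeasureTheory.integral_finset_sum _
      (fun d _ => (integrable_FF t u v c1 c2 (d 0) (d 1)).const_mul _)]
  simp_rw [MeasureTheory.integral_const_mul]
  rw [MvPolynomial.eval_eq', Finset.sum_mul]
  refine Finset.sum_congr rfl fun d _ => ?_
  rw [Jrs t u v c1 c2 hu hv huv (d 0) (d 1), Fin.prod_univ_two]
  have h0 : (![c1 + Complex.I * ∑ j, u j * ((t j):ℂ),
      c2 + Complex.I * ∑ j, v j * ((t j):ℂ)] : Fin 2 → ℂ) 0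
      = c1 + Complex.I * ∑ j, u j * ((t j):ℂ) := rfl
  have h1 : (![c1 + Complex.I * ∑ j, u j * ((t j):ℂ),
      c2 + Complex.I * ∑ j, v j * ((t j):ℂ)] : Fin 2 → ℂ) 1
      = c2 + Complex.I * ∑ j, v j * ((t j):ℂ) := rfl
  rw [h0, h1]
  ring

end Stmt0Aux

/-- for a positive integer κ, quaternions α, β, a homogeneous polynomial P of
degree κ and (X₀,Y₀) ∈ ℂ²,
`∫_ℍ exp(2πi·tr(αy))·exp(−2π·N(y))·P((X₀,Y₀)·A(y+β)) dy
  = exp(−2π·N(α))·P((X₀,Y₀)·(√−1·A(ᾱ)+A(β)))`,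
where the measure on ℍ ≅ ℝ⁴ is 4 times Lebesgue measure. -/
theorem stmt0 (κ : ℕ) (hκ : 0 < κ) (α β : Quaternion ℝ)
    (P : MvPolynomial (Fin 2) ℂ) (hP : P.IsHomogeneous κ) (X₀ Y₀ : ℂ) :
    (∫ a : Fin 4 → ℝ,
        Complex.exp (2 * (Real.pi : ℂ) * Complex.I * ((qtr (α * quatOf a) : ℝ) : ℂ))
          * Complex.exp (-(2 * (Real.pi : ℂ)) * ((qN (quatOf a) : ℝ) : ℂ))
          * MvPolynomial.eval (Matrix.vecMul ![X₀, Y₀] (Amap (quatOf a + β))) P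
        ∂((4 : ℝ≥0∞) • volume))
      = Complex.exp (-(2 * (Real.pi : ℂ)) * ((qN α : ℝ) : ℂ))
          * MvPolynomial.eval
              (Matrix.vecMul ![X₀, Y₀] (Complex.I • Amap (star α) + Amap β)) P := by
  have hu : ∑ j, (![X₀, X₀*Complex.I, -Y₀, Y₀*Complex.I] : Fin 4 → ℂ) j ^ 2 = 0 := by
    rw [Fin.sum_univ_four]
    show X₀^2 + (X₀*Complex.I)^2 + (-Y₀)^2 + (Y₀*Complex.I)^2 = 0
    linear_combination (X₀^2 + Y₀^2) * Complex.I_sq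
  have hv : ∑ j, (![Y₀, -(Y₀*Complex.I), X₀, X₀*Complex.I] : Fin 4 → ℂ) j ^ 2 = 0 := by
    rw [Fin.sum_univ_four]
    show Y₀^2 + (-(Y₀*Complex.I))^2 + X₀^2 + (X₀*Complex.I)^2 = 0
    linear_combination (X₀^2 + Y₀^2) * Complex.I_sq
  have huv : ∑ j, (![X₀, X₀*Complex.I, -Y₀, Y₀*Complex.I] : Fin 4 → ℂ) j
      * (![Y₀, -(Y₀*Complex.I), X₀, X₀*Complex.I] : Fin 4 → ℂ) j = 0 := by
    rw [Fin.sum_univ_four]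
    show X₀*Y₀ + (X₀*Complex.I)*(-(Y₀*Complex.I)) + (-Y₀)*X₀
      + (Y₀*Complex.I)*(X₀*Complex.I) = 0
    ring
  have key := Stmt0Aux.master ![α.re, -α.imI, -α.imJ, -α.imK]
    ![X₀, X₀*Complex.I, -Y₀, Y₀*Complex.I] ![Y₀, -(Y₀*Complex.I), X₀, X₀*Complex.I]
    (X₀*((β.re:ℂ) + (β.imI:ℂ)*Complex.I) + Y₀*(-(β.imJ:ℂ) + (β.imK:ℂ)*Complex.I))
    (X₀*((β.imJ:ℂ) + (β.imK:ℂ)*Complex.I) + Y₀*((β.re:ℂ) - (β.imI:ℂ)*Complex.I))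
    hu hv huv P
  have hM : ∀ (M : Matrix (Fin 2) (Fin 2) ℂ) (j : Fin 2),
      Matrix.vecMul ![X₀,Y₀] M j = X₀ * M 0 j + Y₀ * M 1 j := by
    intro M j
    simp [Matrix.vecMul, dotProduct, Fin.sum_univ_two]
  have e0 : (![α.re, -α.imI, -α.imJ, -α.imK] : Fin 4 → ℝ) 0 = α.re := rfl
  have e1 : (![α.re, -α.imI, -α.imJ, -α.imK] : Fin 4 → ℝ) 1 = -α.imI := rfl
  have e2 : (![α.re, -α.imI, -α.imJ, -α.imK] : Fin 4 → ℝ) 2 = -α.imJ := rfl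
  have e3 : (![α.re, -α.imI, -α.imJ, -α.imK] : Fin 4 → ℝ) 3 = -α.imK := rfl
  have hpt : ∀ a : Fin 4 → ℝ,
      Complex.exp (2 * (Real.pi : ℂ) * Complex.I * ((qtr (α * quatOf a) : ℝ) : ℂ))
        * Complex.exp (-(2 * (Real.pi : ℂ)) * ((qN (quatOf a) : ℝ) : ℂ))
        * MvPolynomial.eval (Matrix.vecMul ![X₀, Y₀] (Amap (quatOf a + β))) P
      = Stmt0Aux.Ef ![α.re, -α.imI, -α.imJ, -α.imK] a
          * MvPolynomial.eval
            ![Stmt0Aux.Lf ![X₀, X₀*Complex.I, -Y₀, Y₀*Complex.I]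
                (X₀*((β.re:ℂ) + (β.imI:ℂ)*Complex.I)
                  + Y₀*(-(β.imJ:ℂ) + (β.imK:ℂ)*Complex.I)) a,
              Stmt0Aux.Lf ![Y₀, -(Y₀*Complex.I), X₀, X₀*Complex.I]
                (X₀*((β.imJ:ℂ) + (β.imK:ℂ)*Complex.I)
                  + Y₀*((β.re:ℂ) - (β.imI:ℂ)*Complex.I)) a] P := by
    intro a
    have hE : Complex.exp (2 * (Real.pi : ℂ) * Complex.I * ((qtr (α * quatOf a) : ℝ) : ℂ))
        * Complex.exp (-(2 * (Real.pi : ℂ)) * ((qN (quatOf a) : ℝ) : ℂ))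
        = Stmt0Aux.Ef ![α.re, -α.imI, -α.imJ, -α.imK] a := by
      rw [← Complex.exp_add]
      unfold Stmt0Aux.Ef
      congr 1
      have h1 : qtr (α * quatOf a)
          = 2*(α.re * a 0 - α.imI * a 1 - α.imJ * a 2 - α.imK * a 3) := by
        rw [qtr, Quaternion.re_mul]
        rfl
      have h2 : qN (quatOf a) = (a 0)^2 + (a 1)^2 + (a 2)^2 + (a 3)^2 := rfl
      rw [h1, h2, Fin.sum_univ_four, e0, e1, e2, e3]
      push_cast
      ring
    have hvec : Matrix.vecMul ![X₀, Y₀] (Amap (quatOf a + β))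
        = ![Stmt0Aux.Lf ![X₀, X₀*Complex.I, -Y₀, Y₀*Complex.I]
              (X₀*((β.re:ℂ) + (β.imI:ℂ)*Complex.I)
                + Y₀*(-(β.imJ:ℂ) + (β.imK:ℂ)*Complex.I)) a,
            Stmt0Aux.Lf ![Y₀, -(Y₀*Complex.I), X₀, X₀*Complex.I]
              (X₀*((β.imJ:ℂ) + (β.imK:ℂ)*Complex.I)
                + Y₀*((β.re:ℂ) - (β.imI:ℂ)*Complex.I)) a] := by
      funext j
      fin_cases j
      · show Matrix.vecMul ![X₀, Y₀] (Amap (quatOf a + β)) 0 = Stmt0Aux.Lf _ _ a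
        rw [hM]
        show X₀ * (((a 0 + β.re :ℝ):ℂ) + ((a 1 + β.imI :ℝ):ℂ)*Complex.I)
            + Y₀ * (-((a 2 + β.imJ :ℝ):ℂ) + ((a 3 + β.imK :ℝ):ℂ)*Complex.I)
          = Stmt0Aux.Lf _ _ a
        unfold Stmt0Aux.Lf
        rw [Fin.sum_univ_four]
        show _ = (X₀*((β.re:ℂ) + (β.imI:ℂ)*Complex.I)
            + Y₀*(-(β.imJ:ℂ) + (β.imK:ℂ)*Complex.I))
          + (X₀ * ((a 0 : ℝ):ℂ) + (X₀*Complex.I) * ((a 1 : ℝ):ℂ)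
            + (-Y₀) * ((a 2 : ℝ):ℂ) + (Y₀*Complex.I) * ((a 3 : ℝ):ℂ))
        push_cast
        ring
      · show Matrix.vecMul ![X₀, Y₀] (Amap (quatOf a + β)) 1 = Stmt0Aux.Lf _ _ a
        rw [hM]
        show X₀ * (((a 2 + β.imJ :ℝ):ℂ) + ((a 3 + β.imK :ℝ):ℂ)*Complex.I)
            + Y₀ * (((a 0 + β.re :ℝ):ℂ) - ((a 1 + β.imI :ℝ):ℂ)*Complex.I)
          = Stmt0Aux.Lf _ _ a
        unfold Stmt0Aux.Lf
        rw [Fin.sum_univ_four]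
        show _ = (X₀*((β.imJ:ℂ) + (β.imK:ℂ)*Complex.I)
            + Y₀*((β.re:ℂ) - (β.imI:ℂ)*Complex.I))
          + (Y₀ * ((a 0 : ℝ):ℂ) + (-(Y₀*Complex.I)) * ((a 1 : ℝ):ℂ)
            + X₀ * ((a 2 : ℝ):ℂ) + (X₀*Complex.I) * ((a 3 : ℝ):ℂ))
        push_cast
        ring
    rw [hvec, hE]
  rw [MeasureTheory.integral_smul_measure,
    MeasureTheory.integral_congr_ae (Filter.Eventually.of_forall hpt), key]
  have f0 : (![X₀, X₀*Complex.I, -Y₀, Y₀*Complex.I] : Fin 4 → ℂ) 0 = X₀ := rfl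
  have f1 : (![X₀, X₀*Complex.I, -Y₀, Y₀*Complex.I] : Fin 4 → ℂ) 1 = X₀*Complex.I := rfl
  have f2 : (![X₀, X₀*Complex.I, -Y₀, Y₀*Complex.I] : Fin 4 → ℂ) 2 = -Y₀ := rfl
  have f3 : (![X₀, X₀*Complex.I, -Y₀, Y₀*Complex.I] : Fin 4 → ℂ) 3 = Y₀*Complex.I := rfl
  have g0 : (![Y₀, -(Y₀*Complex.I), X₀, X₀*Complex.I] : Fin 4 → ℂ) 0 = Y₀ := rfl
  have g1 : (![Y₀, -(Y₀*Complex.I), X₀, X₀*Complex.I] : Fin 4 → ℂ) 1 = -(Y₀*Complex.I) := rfl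
  have g2 : (![Y₀, -(Y₀*Complex.I), X₀, X₀*Complex.I] : Fin 4 → ℂ) 2 = X₀ := rfl
  have g3 : (![Y₀, -(Y₀*Complex.I), X₀, X₀*Complex.I] : Fin 4 → ℂ) 3 = X₀*Complex.I := rfl
  have hs : star α = (⟨α.re, -α.imI, -α.imJ, -α.imK⟩ : Quaternion ℝ) := by
    ext <;> simp
  have hw : Matrix.vecMul ![X₀, Y₀] (Complex.I • Amap (star α) + Amap β)
      = ![(X₀*((β.re:ℂ) + (β.imI:ℂ)*Complex.I) + Y₀*(-(β.imJ:ℂ) + (β.imK:ℂ)*Complex.I))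
            + Complex.I * ∑ j, (![X₀, X₀*Complex.I, -Y₀, Y₀*Complex.I] : Fin 4 → ℂ) j
              * (((![α.re, -α.imI, -α.imJ, -α.imK] : Fin 4 → ℝ) j : ℝ):ℂ),
          (X₀*((β.imJ:ℂ) + (β.imK:ℂ)*Complex.I) + Y₀*((β.re:ℂ) - (β.imI:ℂ)*Complex.I))
            + Complex.I * ∑ j, (![Y₀, -(Y₀*Complex.I), X₀, X₀*Complex.I] : Fin 4 → ℂ) j
              * (((![α.re, -α.imI, -α.imJ, -α.imK] : Fin 4 → ℝ) j : ℝ):ℂ)] := by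
    funext j
    fin_cases j
    · show Matrix.vecMul ![X₀, Y₀] (Complex.I • Amap (star α) + Amap β) 0
        = (X₀*((β.re:ℂ) + (β.imI:ℂ)*Complex.I) + Y₀*(-(β.imJ:ℂ) + (β.imK:ℂ)*Complex.I))
          + Complex.I * ∑ j, (![X₀, X₀*Complex.I, -Y₀, Y₀*Complex.I] : Fin 4 → ℂ) j
            * (((![α.re, -α.imI, -α.imJ, -α.imK] : Fin 4 → ℝ) j : ℝ):ℂ)
      rw [hs, hM, Fin.sum_univ_four, e0, e1, e2, e3, f0, f1, f2, f3]
      show X₀ * (Complex.I * ((α.re:ℂ) + ((-α.imI : ℝ):ℂ)*Complex.I)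
            + ((β.re:ℂ) + (β.imI:ℂ)*Complex.I))
          + Y₀ * (Complex.I * (-((-α.imJ : ℝ):ℂ) + ((-α.imK : ℝ):ℂ)*Complex.I)
            + (-(β.imJ:ℂ) + (β.imK:ℂ)*Complex.I)) = _
      push_cast
      ring
    · show Matrix.vecMul ![X₀, Y₀] (Complex.I • Amap (star α) + Amap β) 1
        = (X₀*((β.imJ:ℂ) + (β.imK:ℂ)*Complex.I) + Y₀*((β.re:ℂ) - (β.imI:ℂ)*Complex.I))
          + Complex.I * ∑ j, (![Y₀, -(Y₀*Complex.I), X₀, X₀*Complex.I] : Fin 4 → ℂ) j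
            * (((![α.re, -α.imI, -α.imJ, -α.imK] : Fin 4 → ℝ) j : ℝ):ℂ)
      rw [hs, hM, Fin.sum_univ_four, e0, e1, e2, e3, g0, g1, g2, g3]
      show X₀ * (Complex.I * (((-α.imJ : ℝ):ℂ) + ((-α.imK : ℝ):ℂ)*Complex.I)
            + ((β.imJ:ℂ) + (β.imK:ℂ)*Complex.I))
          + Y₀ * (Complex.I * ((α.re:ℂ) - ((-α.imI : ℝ):ℂ)*Complex.I)
            + ((β.re:ℂ) - (β.imI:ℂ)*Complex.I)) = _
      push_cast
      ring
  rw [hw]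
  have hqN : ((qN α : ℝ):ℂ)
      = ∑ j, (((![α.re, -α.imI, -α.imJ, -α.imK] : Fin 4 → ℝ) j : ℝ):ℂ)^2 := by
    rw [Fin.sum_univ_four, e0, e1, e2, e3, qN]
    push_cast
    ring
  rw [hqN]
  rw [show ((4:ℝ≥0∞)).toReal = (4:ℝ) from by norm_num, Complex.real_smul]
  push_cast
  ring
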